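/- Let γ : [0,T] → ℝ³ be absolutely continuous with γ' ∈ L²([0,T];ℝ³), let ω ∈ L²([0,T];ℝ³), and let v : [0,T] → ℝ³ be absolutely continuous with v(0) = 0. Then v(s) = ∫₀^s ω(σ) × (γ(s) − γ(σ)) dσ holds for all s ∈ [0,T] if and only if v'(s) = ( ∫₀^s ω(σ) dσ ) × γ'(s) for a.e. s ∈ [0,T]. -/

import Mathlib

open MeasureTheory Set Classical
noncomputable section

/-- Three-dimensional Euclidean space. -/
abbrev E3 : Type := EuclideanSpace ℝ (Fin 3)

/-- The cross product on `ℝ³`. -/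
def cross (u v : E3) : E3 :=
  WithLp.toLp 2 ![u 1 * v 2 - u 2 * v 1, u 2 * v 0 - u 0 * v 2, u 0 * v 1 - u 1 * v 0]

/-- The Euclidean inner product on `ℝ³`. -/
def rinner (u v : E3) : ℝ := inner ℝ u v

/-- The signed distance to the boundary of `Ω`: negative inside `Ω`, positive outside. -/
def signedDistBdry (Ω : Set E3) (x : E3) : ℝ :=
  if x ∈ Ω then -(Metric.infDist x (frontier Ω)) else Metric.infDist x (frontier Ω)

/-- The (unit) outer normal to `Ω`, i.e. the gradient of the signed distance. -/
def outerNormal (Ω : Set E3) (x : E3) : E3 := gradient (signedDistBdry Ω) x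

/-- The set `Ω` has boundary of class `C^k`: near every boundary point, `Ω` is the sublevel
set of a `C^k` defining function with nonvanishing gradient. -/
def HasCkBoundary (Ω : Set E3) (k : ℕ∞) : Prop :=
  ∀ x ∈ frontier Ω, ∃ (U : Set E3) (f : E3 → ℝ), IsOpen U ∧ x ∈ U ∧
    ContDiffOn ℝ k f U ∧ (∀ y ∈ U, gradient f y ≠ 0) ∧
    Ω ∩ U = {y ∈ U | f y < 0} ∧ frontier Ω ∩ U = {y ∈ U | f y = 0}

/-- `γ`, together with its derivative `γd` and second derivative `γdd`, is a curve of Sobolev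
class `H²` on `[0,T]`: `γ` and `γd` are absolutely continuous with the stated derivatives,
and `γdd` is square integrable. -/
def IsH2Curve (T : ℝ) (γ γd γdd : ℝ → E3) : Prop :=
  (∀ s ∈ Icc (0:ℝ) T, γ s = γ 0 + ∫ σ in (0:ℝ)..s, γd σ) ∧
  (∀ s ∈ Icc (0:ℝ) T, γd s = γd 0 + ∫ σ in (0:ℝ)..s, γdd σ) ∧
  MemLp γdd 2 (volume.restrict (Icc (0:ℝ) T))

/-- The `L²` norm of `ω` on `[0,T]`. -/
def L2norm (T : ℝ) (ω : ℝ → E3) : ℝ := Real.sqrt (∫ s in (0:ℝ)..T, ‖ω s‖ ^ 2)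

/-- The `H²` norm of a curve on `[0,T]` (given together with its two derivatives). -/
def H2norm (T : ℝ) (v vd vdd : ℝ → E3) : ℝ :=
  Real.sqrt ((∫ s in (0:ℝ)..T, ‖v s‖ ^ 2) + (∫ s in (0:ℝ)..T, ‖vd s‖ ^ 2) +
    (∫ s in (0:ℝ)..T, ‖vdd s‖ ^ 2))

/-- Membership in the tube `V_ρ` around the (extended) initial curve `γ₀`:
`γ(0) = 0`, `γ'(0) = γ₀'(0)`, `|γ'| ≡ 1` on `[0,T]`, and `∫₀^T |γ'' − γ₀''|² ≤ ρ`. -/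
def InTube (T ρ : ℝ) (γ₀d0 : E3) (γ₀dd : ℝ → E3) (γ γd γdd : ℝ → E3) : Prop :=
  IsH2Curve T γ γd γdd ∧ γ 0 = 0 ∧ γd 0 = γ₀d0 ∧
  (∀ s ∈ Icc (0:ℝ) T, ‖γd s‖ = 1) ∧
  (∫ s in (0:ℝ)..T, ‖γdd s - γ₀dd s‖ ^ 2) ≤ ρ

/-- The second derivative of the curve `γ₀` extended linearly beyond `t₀`. -/
def extendSecond (t₀ : ℝ) (γ₀dd : ℝ → E3) : ℝ → E3 :=
  fun s => if s ≤ t₀ then γ₀dd s else 0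

/-- The rotated curve `γ_ω(s) = γ(s) + ∫₀^s ω(σ) × (γ(s) − γ(σ)) dσ`. -/
def rotCurve (γ ω : ℝ → E3) (s : ℝ) : E3 :=
  γ s + ∫ σ in (0:ℝ)..s, cross (ω σ) (γ s - γ σ)

/-- The elastic cost `J(ω) = ∫₀^T e^{β(t−s)} |ω(s)|² ds`. -/
def Jcost (β t T : ℝ) (ω : ℝ → E3) : ℝ :=
  ∫ s in (0:ℝ)..T, Real.exp (β * (t - s)) * ‖ω s‖ ^ 2

/-- The maximal depth `E(t,γ,Ω)` at which `γ|_{[0,t]}` penetrates inside `Ω` (zero if it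
does not enter `Ω`). -/
def penDepth (t : ℝ) (γ : ℝ → E3) (Ω : Set E3) : ℝ :=
  sSup (insert 0 {d | ∃ s ∈ Icc (0:ℝ) t, γ s ∈ Ω ∧ d = Metric.infDist (γ s) (frontier Ω)})

/-- The breakdown configuration (B): the tip touches the obstacle perpendicularly, and the
curve is straight (a.e.) wherever it does not touch the boundary. -/
def Breakdown (Ω : Set E3) (t₀ : ℝ) (γ γd γdd : ℝ → E3) : Prop :=
  γ t₀ ∈ frontier Ω ∧ γd t₀ = - outerNormal Ω (γ t₀) ∧
  (∀ᵐ s : ℝ, s ∈ Ioo (0:ℝ) t₀ → γ s ∉ frontier Ω → γdd s = 0)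

/-- The linear map `v ↦ w × v`. -/
def crossLM (w : E3) : E3 →ₗ[ℝ] E3 where
  toFun v := cross w v
  map_add' a b := by
    ext i
    fin_cases i <;> simp [cross, PiLp.add_apply] <;> ring
  map_smul' c a := by
    ext i
    fin_cases i <;> simp [cross, PiLp.smul_apply, smul_eq_mul] <;> ring

/-- The continuous linear map `A(w) : v ↦ w × v`. -/
def crossCLM (w : E3) : E3 →L[ℝ] E3 := LinearMap.toContinuousLinearMap (crossLM w)

/-- The rotation `R[w] = exp(A(w))`, where `A(w)v = w × v`. -/
def rotOf (w : E3) : E3 →L[ℝ] E3 := NormedSpace.exp (crossCLM w)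


/-! ### Auxiliary lemmas -/

section Aux
open Filter IsUnifLocDoublingMeasure
open scoped Topology

set_option maxHeartbeats 1000000

/-- The cross product as a linear map into continuous linear maps. -/
def crossL2 : E3 →ₗ[ℝ] E3 →L[ℝ] E3 where
  toFun w := crossCLM w
  map_add' a b := by
    ext v i
    fin_cases i <;> simp [crossCLM, crossLM, cross, PiLp.add_apply] <;> ring
  map_smul' c a := by
    ext v i
    fin_cases i <;> simp [crossCLM, crossLM, cross, PiLp.smul_apply, smul_eq_mul] <;> ring

/-- The cross product as a continuous bilinear map. -/
def crossB : E3 →L[ℝ] E3 →L[ℝ] E3 := LinearMap.toContinuousLinearMap crossL2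

lemma crossB_apply (u v : E3) : crossB u v = cross u v := rfl

lemma cont_crossB : Continuous (fun p : E3 × E3 => crossB p.1 p.2) :=
  crossB.isBoundedBilinearMap.continuous

/-- Fubini on the triangle: the rotation integral can be rewritten through the derivative. -/
lemma key_fubini {T : ℝ} {γ γd ω : ℝ → E3}
    (hγac : ∀ s ∈ Icc (0:ℝ) T, γ s = γ 0 + ∫ σ in (0:ℝ)..s, γd σ)
    (hγint : IntegrableOn γd (Icc (0:ℝ) T))
    (hωint : IntegrableOn ω (Icc (0:ℝ) T))
    {s : ℝ} (hs : s ∈ Icc (0:ℝ) T) :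
    (∫ σ in (0:ℝ)..s, cross (ω σ) (γ s - γ σ))
      = ∫ τ in (0:ℝ)..s, cross (∫ σ in (0:ℝ)..τ, ω σ) (γd τ) := by
  obtain ⟨hs0, hsT⟩ := hs
  have hγsub : ∀ a b : ℝ, a ∈ Icc (0:ℝ) T → b ∈ Icc (0:ℝ) T →
      IntervalIntegrable γd volume a b := fun a b ha hb =>
    (hγint.mono_set (uIcc_subset_Icc ha hb)).intervalIntegrable
  have hωsub : ∀ a b : ℝ, a ∈ Icc (0:ℝ) T → b ∈ Icc (0:ℝ) T →
      IntervalIntegrable ω volume a b := fun a b ha hb =>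
    (hωint.mono_set (uIcc_subset_Icc ha hb)).intervalIntegrable
  have hsI : s ∈ Icc (0:ℝ) T := ⟨hs0, hsT⟩
  have h0I : (0:ℝ) ∈ Icc (0:ℝ) T := ⟨le_refl _, le_trans hs0 hsT⟩
  have step1 : (∫ σ in (0:ℝ)..s, cross (ω σ) (γ s - γ σ))
      = ∫ σ in (0:ℝ)..s, ∫ τ in σ..s, crossB (ω σ) (γd τ) := by
    apply intervalIntegral.integral_congr
    intro σ hσ
    rw [uIcc_of_le hs0] at hσ
    have hσI : σ ∈ Icc (0:ℝ) T := ⟨hσ.1, hσ.2.trans hsT⟩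
    have hdiff : γ s - γ σ = ∫ τ in σ..s, γd τ := by
      rw [hγac s hsI, hγac σ hσI]
      have := intervalIntegral.integral_interval_sub_left
        (hγsub 0 s h0I hsI) (hγsub 0 σ h0I hσI)
      rw [← this]; abel
    show cross (ω σ) (γ s - γ σ) = ∫ τ in σ..s, crossB (ω σ) (γd τ)
    rw [hdiff, ← crossB_apply,
      ContinuousLinearMap.intervalIntegral_comp_comm _ (hγsub σ s hσI hsI)]
  rw [step1]
  set μ := volume.restrict (Ioc (0:ℝ) s) with hμ
  set F : ℝ × ℝ → E3 := fun p => crossB (ω p.1) (γd p.2) with hF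
  set G : ℝ × ℝ → E3 := Set.indicator {p : ℝ × ℝ | p.1 ≤ p.2} F with hG
  have hIocsub : Ioc (0:ℝ) s ⊆ Icc (0:ℝ) T := fun x hx => ⟨hx.1.le, hx.2.trans hsT⟩
  have hωμ : Integrable ω μ := (hωint.mono_set hIocsub)
  have hγμ : Integrable γd μ := (hγint.mono_set hIocsub)
  have hFm : AEStronglyMeasurable F (μ.prod μ) :=
    cont_crossB.comp_aestronglyMeasurable (hωμ.1.comp_fst.prodMk hγμ.1.comp_snd)
  have hGm : AEStronglyMeasurable G (μ.prod μ) :=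
    hFm.indicator (measurableSet_le measurable_fst measurable_snd)
  have hGint : Integrable G (μ.prod μ) := by
    have hbd : Integrable (fun p : ℝ × ℝ => ‖crossB‖ * (‖ω p.1‖ * ‖γd p.2‖)) (μ.prod μ) :=
      (hωμ.norm.mul_prod hγμ.norm).const_mul _
    refine hbd.mono' hGm (Filter.Eventually.of_forall fun p => ?_)
    have h1 : ‖G p‖ ≤ ‖F p‖ := norm_indicator_le_norm_self F p
    have h2 : ‖F p‖ ≤ ‖crossB‖ * ‖ω p.1‖ * ‖γd p.2‖ := crossB.le_opNorm₂ _ _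
    calc ‖G p‖ ≤ ‖crossB‖ * ‖ω p.1‖ * ‖γd p.2‖ := h1.trans h2
    _ = ‖crossB‖ * (‖ω p.1‖ * ‖γd p.2‖) := by ring
  have step2 : (∫ σ in (0:ℝ)..s, ∫ τ in σ..s, crossB (ω σ) (γd τ))
      = ∫ σ, (∫ τ, G (σ, τ) ∂μ) ∂μ := by
    rw [intervalIntegral.integral_of_le hs0]
    apply setIntegral_congr_fun measurableSet_Ioc
    intro σ hσ
    have hind : ∀ τ, G (σ, τ) = (Ici σ).indicator (fun τ => crossB (ω σ) (γd τ)) τ := by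
      intro τ
      by_cases h : σ ≤ τ <;> simp [hG, hF, Set.indicator_apply, h]
    show (∫ τ in σ..s, crossB (ω σ) (γd τ)) = ∫ τ, G (σ, τ) ∂μ
    simp only [hind]
    rw [hμ, integral_indicator measurableSet_Ici, Measure.restrict_restrict measurableSet_Ici]
    have hset : Ici σ ∩ Ioc 0 s = Icc σ s := by
      ext τ
      simp only [mem_inter_iff, mem_Ici, mem_Ioc, mem_Icc]
      exact ⟨fun ⟨h1, _, h3⟩ => ⟨h1, h3⟩, fun ⟨h1, h2⟩ => ⟨h1, hσ.1.trans_le h1, h2⟩⟩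
    rw [hset, integral_Icc_eq_integral_Ioc, intervalIntegral.integral_of_le hσ.2]
  have hGint' : Integrable (Function.uncurry fun σ τ => G (σ, τ)) (μ.prod μ) := by
    exact hGint
  rw [step2, integral_integral_swap hGint']
  rw [intervalIntegral.integral_of_le hs0]
  apply setIntegral_congr_fun measurableSet_Ioc
  intro τ hτ
  have hτI : τ ∈ Icc (0:ℝ) T := hIocsub hτ
  have hind : ∀ σ, G (σ, τ) = (Iic τ).indicator (fun σ => crossB (ω σ) (γd τ)) σ := by
    intro σ
    by_cases h : σ ≤ τ <;> simp [hG, hF, Set.indicator_apply, h]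
  show (∫ σ, G (σ, τ) ∂μ) = cross (∫ σ in (0:ℝ)..τ, ω σ) (γd τ)
  simp only [hind]
  rw [hμ, integral_indicator measurableSet_Iic, Measure.restrict_restrict measurableSet_Iic]
  have hset : Iic τ ∩ Ioc 0 s = Ioc 0 τ := by
    ext σ
    simp only [mem_inter_iff, mem_Iic, mem_Ioc]
    exact ⟨fun ⟨h1, h2, _⟩ => ⟨h2, h1⟩, fun ⟨h1, h2⟩ => ⟨h2, h1, h2.trans hτ.2⟩⟩
  have hcomp : ∀ σ, crossB (ω σ) (γd τ) = (crossB.flip (γd τ)) (ω σ) := fun σ => rfl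
  rw [hset]
  simp only [hcomp]
  rw [ContinuousLinearMap.integral_comp_comm _ (hωint.mono_set (fun x hx =>
    ⟨hx.1.le, hx.2.trans hτI.2⟩)), intervalIntegral.integral_of_le hτ.1.le]
  rfl

/-- If all integrals of an integrable function over `Ioc 0 s`, `s ∈ [0,T]`, vanish,
then the function vanishes a.e. on `[0,T]`. -/
lemma ae_zero_of_forall_integral_Ioc_eq_zero {T : ℝ} {h : ℝ → E3}
    (hint : IntegrableOn h (Icc (0:ℝ) T))
    (hz : ∀ s ∈ Icc (0:ℝ) T, (∫ σ in Ioc (0:ℝ) s, h σ) = 0) :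
    ∀ᵐ s ∂(volume.restrict (Icc (0:ℝ) T)), h s = 0 := by
  set h' : ℝ → E3 := (Icc (0:ℝ) T).indicator h with hh'
  have h'int : Integrable h' volume :=
    (integrable_indicator_iff measurableSet_Icc).2 hint
  have h'loc : LocallyIntegrable h' volume := h'int.locallyIntegrable
  have hends : (volume : Measure ℝ) ({0, T} : Set ℝ) = 0 :=
    (Set.toFinite _).measure_zero volume
  rw [ae_restrict_iff' measurableSet_Icc]
  filter_upwards [(vitaliFamily (volume : Measure ℝ) 1).ae_tendsto_average h'loc,
    measure_eq_zero_iff_ae_notMem.1 hends] with x hx hx2 hxIcc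
  simp only [mem_insert_iff, mem_singleton_iff, not_or] at hx2
  have hx0 : 0 < x := hxIcc.1.lt_of_ne (Ne.symm hx2.1)
  have hxT : x < T := hxIcc.2.lt_of_ne hx2.2
  have key0 : ∀ y ∈ Ioc x T, (∫ t in Icc x y, h' t) = 0 := by
    intro y hy
    have hsub : Ioc x y ⊆ Icc (0:ℝ) T := fun t ht =>
      ⟨(hx0.trans ht.1).le, ht.2.trans hy.2⟩
    have e1 : (∫ t in Icc x y, h' t) = ∫ t in Ioc x y, h' t :=
      integral_Icc_eq_integral_Ioc
    have e2 : (∫ t in Ioc x y, h' t) = ∫ t in Ioc x y, h t :=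
      setIntegral_congr_fun measurableSet_Ioc fun t ht => indicator_of_mem (hsub ht) h
    have e3 : Ioc (0:ℝ) y = Ioc 0 x ∪ Ioc x y :=
      (Ioc_union_Ioc_eq_Ioc hx0.le hy.1.le).symm
    have e4 : (∫ t in Ioc (0:ℝ) y, h t) = (∫ t in Ioc (0:ℝ) x, h t) + ∫ t in Ioc x y, h t := by
      rw [e3]
      exact setIntegral_union (Ioc_disjoint_Ioc_of_le le_rfl) measurableSet_Ioc
        (hint.mono_set (fun t ht => ⟨ht.1.le, ht.2.trans hxIcc.2⟩))
        (hint.mono_set hsub)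
    have z1 := hz y ⟨hx0.le.trans hy.1.le, hy.2⟩
    have z2 := hz x hxIcc
    rw [z1, z2, zero_add] at e4
    rw [e1, e2, ← e4]
  have tend1 : Tendsto (fun y => ⨍ t in Icc x y, h' t) (𝓝[>] x) (𝓝 (h' x)) :=
    hx.comp (Real.tendsto_Icc_vitaliFamily_right x)
  have tend2 : Tendsto (fun y => ⨍ t in Icc x y, h' t) (𝓝[>] x) (𝓝 0) := by
    apply Tendsto.congr' _ tendsto_const_nhds
    filter_upwards [Ioc_mem_nhdsGT_of_mem ⟨le_refl x, hxT⟩] with y hy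
    rw [setAverage_eq, key0 y hy, smul_zero]
  have hfin : h' x = 0 := tendsto_nhds_unique tend1 tend2
  rwa [hh', indicator_of_mem hxIcc] at hfin

end Aux

/-- a map `v` with `v(0)=0` equals `s ↦ ∫₀^s ω(σ) × (γ(s) − γ(σ)) dσ` on `[0,T]`
if and only if its derivative satisfies `v'(s) = (∫₀^s ω) × γ'(s)` for a.e. `s ∈ [0,T]`. -/
theorem stem_growth_velocity_representation_iff
    (T : ℝ) (hT : 0 < T) (γ γd : ℝ → E3)
    (hγac : ∀ s ∈ Icc (0:ℝ) T, γ s = γ 0 + ∫ σ in (0:ℝ)..s, γd σ)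
    (hγd : MemLp γd 2 (volume.restrict (Icc (0:ℝ) T)))
    (ω : ℝ → E3) (hω : MemLp ω 2 (volume.restrict (Icc (0:ℝ) T)))
    (v vd : ℝ → E3)
    (hvac : ∀ s ∈ Icc (0:ℝ) T, v s = v 0 + ∫ σ in (0:ℝ)..s, vd σ)
    (hvd : IntegrableOn vd (Icc (0:ℝ) T))
    (hv0 : v 0 = 0) :
    (∀ s ∈ Icc (0:ℝ) T, v s = ∫ σ in (0:ℝ)..s, cross (ω σ) (γ s - γ σ)) ↔
      (∀ᵐ s : ℝ, s ∈ Icc (0:ℝ) T →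
        vd s = cross (∫ σ in (0:ℝ)..s, ω σ) (γd s)) := by
  haveI : IsFiniteMeasure (volume.restrict (Icc (0:ℝ) T)) :=
    ⟨by rw [Measure.restrict_apply_univ]; exact measure_Icc_lt_top⟩
  have hγint : IntegrableOn γd (Icc (0:ℝ) T) := hγd.integrable one_le_two
  have hωint : IntegrableOn ω (Icc (0:ℝ) T) := hω.integrable one_le_two
  set g : ℝ → E3 := fun τ => cross (∫ σ in (0:ℝ)..τ, ω σ) (γd τ) with hg
  -- the primitive of ω is continuous, hence bounded, on [0,T]
  have hWcont : ContinuousOn (fun x => ∫ t in Ioc (0:ℝ) x, ω t) (Icc (0:ℝ) T) :=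
    intervalIntegral.continuousOn_primitive hωint
  have hWeq : ∀ x ∈ Icc (0:ℝ) T, (∫ σ in (0:ℝ)..x, ω σ) = ∫ t in Ioc (0:ℝ) x, ω t :=
    fun x hx => intervalIntegral.integral_of_le hx.1
  obtain ⟨C, hC⟩ := (isCompact_Icc).exists_bound_of_continuousOn hWcont
  have hC0 : 0 ≤ C :=
    le_trans (norm_nonneg _) (hC 0 ⟨le_refl _, hT.le⟩)
  -- g is integrable on [0,T]
  have hWm : AEStronglyMeasurable (fun x => ∫ σ in (0:ℝ)..x, ω σ)
      (volume.restrict (Icc (0:ℝ) T)) := by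
    refine AEStronglyMeasurable.congr
      (hWcont.aestronglyMeasurable measurableSet_Icc) ?_
    rw [Filter.EventuallyEq, ae_restrict_iff' measurableSet_Icc]
    exact Filter.Eventually.of_forall fun x hx => (hWeq x hx).symm
  have hgm : AEStronglyMeasurable g (volume.restrict (Icc (0:ℝ) T)) :=
    cont_crossB.comp_aestronglyMeasurable (hWm.prodMk hγint.1)
  have hgint : IntegrableOn g (Icc (0:ℝ) T) := by
    have hbd : Integrable (fun x => ‖crossB‖ * C * ‖γd x‖)
        (volume.restrict (Icc (0:ℝ) T)) := (hγint.norm.const_mul _)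
    refine hbd.mono' hgm ?_
    rw [ae_restrict_iff' measurableSet_Icc]
    refine Filter.Eventually.of_forall fun x hx => ?_
    have h1 : ‖g x‖ ≤ ‖crossB‖ * ‖(∫ σ in (0:ℝ)..x, ω σ)‖ * ‖γd x‖ := by
      rw [hg]
      exact crossB.le_opNorm₂ _ _
    have h2 : ‖(∫ σ in (0:ℝ)..x, ω σ)‖ ≤ C := by
      rw [hWeq x hx]; exact hC x hx
    calc ‖g x‖ ≤ ‖crossB‖ * ‖(∫ σ in (0:ℝ)..x, ω σ)‖ * ‖γd x‖ := h1
    _ ≤ ‖crossB‖ * C * ‖γd x‖ := by gcongr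
  constructor
  · -- forward direction
    intro H
    have hz : ∀ s ∈ Icc (0:ℝ) T, (∫ σ in Ioc (0:ℝ) s, (vd σ - g σ)) = 0 := by
      intro s hs
      have e1 : v s = ∫ σ in (0:ℝ)..s, g σ :=
        (H s hs).trans (key_fubini hγac hγint hωint hs)
      have e2 : v s = ∫ σ in (0:ℝ)..s, vd σ := by
        rw [hvac s hs, hv0, zero_add]
      have hsub : Ioc (0:ℝ) s ⊆ Icc (0:ℝ) T := fun x hx => ⟨hx.1.le, hx.2.trans hs.2⟩
      rw [integral_sub (hvd.mono_set hsub) (hgint.mono_set hsub)]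
      rw [← intervalIntegral.integral_of_le hs.1, ← intervalIntegral.integral_of_le hs.1,
        ← e2, ← e1, sub_self]
    have hae := ae_zero_of_forall_integral_Ioc_eq_zero (hvd.sub hgint) hz
    rw [ae_restrict_iff' measurableSet_Icc] at hae
    filter_upwards [hae] with s hs hsI
    have h0 : vd s - g s = 0 := hs hsI
    exact sub_eq_zero.1 h0
  · -- backward direction
    intro H s hs
    rw [hvac s hs, hv0, zero_add, key_fubini hγac hγint hωint hs]
    apply intervalIntegral.integral_congr_ae
    filter_upwards [H] with σ hσ hσI
    have hmem : σ ∈ Icc (0:ℝ) T := by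
      rw [uIoc_of_le hs.1] at hσI
      exact ⟨hσI.1.le, hσI.2.trans hs.2⟩
    exact hσ hmem
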